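/- There exists a constant C > 0 such that for all ξ ≥ 2 and all w ∈ (−1,1) one has |∫_{−1}^{1} Φ₀(ξ,w,z) dz − E(ξ,w)| ≤ C·ξ⁻³, where E(ξ,w) = (3/(2π²))·(1 − u²)·ξ⁻² if u = ξ(1−|w|) < 1, and E(ξ,w) = 0 otherwise. -/

import Mathlib

open Real Set MeasureTheory

noncomputable def Υ (x : ℝ) : ℝ := if x ≤ 0 then 0 else if x < 1 then x else 1

noncomputable def Φ₀ (ξ w z : ℝ) : ℝ :=
  if w + z ≠ 0 then (6 / π ^ 2) * Υ (1 + (ξ⁻¹ - max |w| |z| - 1) / |w + z|)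
  else if ξ⁻¹ < 1 + |w| then 0 else 6 / π ^ 2

/-- The main asymptotic term of `∫_{−1}^{1} Φ₀(ξ,w,z) dz` as `ξ → ∞`. -/
noncomputable def E₁ (ξ w : ℝ) : ℝ :=
  if ξ * (1 - |w|) < 1 then
    (3 / (2 * π ^ 2)) * (1 - (ξ * (1 - |w|)) ^ 2) * ξ⁻¹ ^ 2
  else 0

lemma phi_eq (ξ w z : ℝ) (hξ : 2 ≤ ξ) (hw0 : 0 ≤ w) (hw1 : w < 1) :
    Φ₀ ξ w z = (6 / π ^ 2) * (max (min w z - (1 - ξ⁻¹)) 0 / (w + z)) := by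
  have hξ0 : (0:ℝ) < ξ := by linarith
  have hε2 : ξ⁻¹ ≤ 1/2 := by
    rw [show (1:ℝ)/2 = (2:ℝ)⁻¹ by norm_num]
    exact inv_anti₀ (by norm_num) hξ
  have hεpos : 0 < ξ⁻¹ := inv_pos.2 hξ0
  have haw : |w| = w := abs_of_nonneg hw0
  by_cases hm : min w z ≤ 1 - ξ⁻¹
  · have hmax : max (min w z - (1 - ξ⁻¹)) 0 = 0 := max_eq_right (by linarith)
    rw [hmax]
    simp only [zero_div, mul_zero]
    unfold Φ₀
    by_cases h0 : w + z = 0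
    · rw [if_neg (by simpa using h0), if_pos (by rw [haw]; linarith)]
    · rw [if_pos h0]
      have hpos : 0 < |w + z| := abs_pos.2 h0
      have habs : |w + z| ≤ 1 + max w |z| - ξ⁻¹ := by
        rcases le_or_gt 0 z with hz | hz
        · have : |z| = z := abs_of_nonneg hz
          rw [this, abs_of_nonneg (by linarith)]
          have := min_add_max w z
          rcases le_total w z with h | h
          · simp [min_eq_left h, max_eq_right h] at *; linarith [min_eq_left h ▸ hm]
          · have : min w z = z := min_eq_right h
            have hmx : max w z = w := max_eq_left h
            rw [hmx]; rw [this] at hm; linarith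
        · have hz' : |z| = -z := abs_of_neg hz
          rw [hz']
          have h1 : |w + z| ≤ max w (-z) := by
            rw [abs_le]
            refine ⟨by linarith [le_max_right w (-z)], by linarith [le_max_left w (-z)]⟩
          linarith
      have hΥ : Υ (1 + (ξ⁻¹ - max |w| |z| - 1) / |w + z|) = 0 := by
        unfold Υ
        rw [if_pos]
        rw [haw]
        have : (ξ⁻¹ - max w |z| - 1) / |w + z| ≤ -1 := by
          rw [div_le_iff₀ hpos]; linarith
        linarith
      rw [hΥ, mul_zero]
  · push_neg at hm
    have hwc : 1 - ξ⁻¹ < w := lt_of_lt_of_le hm (min_le_left _ _)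
    have hzc : 1 - ξ⁻¹ < z := lt_of_lt_of_le hm (min_le_right _ _)
    have hz0 : 0 < z := by linarith
    have haz : |z| = z := abs_of_nonneg hz0.le
    have hwz : (1:ℝ) ≤ w + z := by linarith
    have h0 : w + z ≠ 0 := by positivity
    have habs : |w + z| = w + z := abs_of_pos (by linarith)
    unfold Φ₀
    rw [if_pos h0, haw, haz, habs]
    have harg : 1 + (ξ⁻¹ - max w z - 1) / (w + z) = (min w z - (1 - ξ⁻¹)) / (w + z) := by
      rw [show (min w z - (1 - ξ⁻¹)) = (w + z) + (ξ⁻¹ - max w z - 1) by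
        linarith [min_add_max w z]]
      rw [add_div, div_self (by linarith : w + z ≠ 0)]
    rw [harg]
    have hargpos : 0 < (min w z - (1 - ξ⁻¹)) / (w + z) :=
      div_pos (by linarith) (by linarith)
    have harglt : (min w z - (1 - ξ⁻¹)) / (w + z) < 1 := by
      rw [div_lt_one (by linarith)]
      have : min w z ≤ z := min_le_right _ _
      linarith
    unfold Υ
    rw [if_neg (not_le.2 hargpos), if_pos harglt,
      max_eq_left (by linarith : (0:ℝ) ≤ min w z - (1 - ξ⁻¹))]


lemma main_nonneg (ξ w : ℝ) (hξ : 2 ≤ ξ) (hw0 : 0 ≤ w) (hw1 : w < 1) :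
    |(∫ z in (-1 : ℝ)..1, Φ₀ ξ w z) - E₁ ξ w| ≤ ξ⁻¹ ^ 3 := by
  have hξ0 : (0:ℝ) < ξ := by linarith
  have hε2 : ξ⁻¹ ≤ 1/2 := by
    rw [show (1:ℝ)/2 = (2:ℝ)⁻¹ by norm_num]
    exact inv_anti₀ (by norm_num) hξ
  have hεpos : 0 < ξ⁻¹ := inv_pos.2 hξ0
  have hπ : (0:ℝ) < π ^ 2 := by positivity
  have hπ6 : 6 / π ^ 2 ≤ 1 := by
    rw [div_le_one hπ]
    nlinarith [pi_gt_three]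
  set ε := ξ⁻¹ with hεdef
  set c := 1 - ε with hcdef
  have hc1 : c ≤ 1 := by simp [hcdef]; linarith
  have hch : (1:ℝ)/2 ≤ c := by simp [hcdef]; linarith
  by_cases hcw : w ≤ c
  · -- integrand vanishes identically
    have hI : (∫ z in (-1 : ℝ)..1, Φ₀ ξ w z) = 0 := by
      rw [show (0:ℝ) = ∫ z in (-1:ℝ)..1, (0:ℝ) by simp]
      apply intervalIntegral.integral_congr
      intro z hz
      rw [phi_eq ξ w z hξ hw0 hw1]
      have : max (min w z - (1 - ξ⁻¹)) 0 = 0 :=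
        max_eq_right (by rw [← hεdef]; linarith [min_le_left w z])
      rw [this]; simp
    have hE : E₁ ξ w = 0 := by
      rw [E₁, if_neg]
      rw [abs_of_nonneg hw0]
      push_neg
      have h1 : ε ≤ 1 - w := by linarith [hcdef ▸ hcw]
      calc (1:ℝ) = ξ * ε := by rw [hεdef, mul_inv_cancel₀ hξ0.ne']
        _ ≤ ξ * (1 - w) := by nlinarith
    rw [hI, hE]; simp; positivity
  · push_neg at hcw
    have hwh : (1:ℝ)/2 ≤ w := le_trans hch hcw.le
    set f : ℝ → ℝ := fun z => (6 / π ^ 2) * (max (min w z - c) 0 / (w + z)) with hfdef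
    set g : ℝ → ℝ := fun z => (3 / π ^ 2) * max (min w z - c) 0 with hgdef
    have hfz : ∀ z ≤ c, f z = 0 := by
      intro z hz
      have : max (min w z - c) 0 = 0 := max_eq_right (by linarith [min_le_right w z])
      simp [hfdef, this]
    -- Φ₀ = f
    have hPhif : ∀ z, Φ₀ ξ w z = f z := fun z => phi_eq ξ w z hξ hw0 hw1
    -- continuity of numerator
    have hnum : Continuous fun z : ℝ => max (min w z - c) 0 :=
      (((continuous_const.min continuous_id).sub continuous_const).max continuous_const)
    have hgc : Continuous g := continuous_const.mul hnum
    have hfc1 : ContinuousOn f (uIcc c 1) := by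
      apply ContinuousOn.mul continuousOn_const
      apply ContinuousOn.div hnum.continuousOn (continuous_const.add continuous_id).continuousOn
      intro x hx
      rw [uIcc_of_le hc1] at hx
      have := hx.1
      intro h; simp at h; nlinarith
    have hfi1 : IntervalIntegrable f volume c 1 := hfc1.intervalIntegrable
    have hfi0 : IntervalIntegrable f volume (-1) c := by
      rw [intervalIntegrable_iff]
      apply (integrableOn_zero (s := uIoc (-1:ℝ) c)).congr_fun _ measurableSet_uIoc
      intro z hz
      rw [uIoc_of_le (by linarith : (-1:ℝ) ≤ c)] at hz
      exact (hfz z hz.2).symm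
    have hsplit : (∫ z in (-1:ℝ)..1, f z) = (∫ z in (-1:ℝ)..c, f z) + ∫ z in c..1, f z :=
      (intervalIntegral.integral_add_adjacent_intervals hfi0 hfi1).symm
    have hzero : (∫ z in (-1:ℝ)..c, f z) = 0 := by
      rw [show (0:ℝ) = ∫ z in (-1:ℝ)..c, (0:ℝ) by simp]
      apply intervalIntegral.integral_congr
      intro z hz
      rw [uIcc_of_le (by linarith : (-1:ℝ) ≤ c)] at hz
      exact hfz z hz.2
    -- E₁ = ∫ g on [c,1]
    have hE : E₁ ξ w = ∫ z in c..1, g z := by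
      have hg1 : (∫ z in c..w, g z) = ∫ z in c..w, (3 / π ^ 2) * (z - c) := by
        apply intervalIntegral.integral_congr
        intro z hz
        rw [uIcc_of_le hcw.le] at hz
        have h1 : min w z = z := min_eq_right hz.2
        have h2 : max (z - c) 0 = z - c := max_eq_left (by linarith [hz.1])
        simp [hgdef, h1, h2]
      have hg2 : (∫ z in w..1, g z) = ∫ z in w..1, (3 / π ^ 2) * (w - c) := by
        apply intervalIntegral.integral_congr
        intro z hz
        rw [uIcc_of_le hw1.le] at hz
        have h1 : min w z = w := min_eq_left hz.1
        have h2 : max (w - c) 0 = w - c := max_eq_left (by linarith)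
        simp [hgdef, h1, h2]
      have hadd : (∫ z in c..1, g z) = (∫ z in c..w, g z) + ∫ z in w..1, g z :=
        (intervalIntegral.integral_add_adjacent_intervals
          (hgc.intervalIntegrable _ _) (hgc.intervalIntegrable _ _)).symm
      have hv1 : (∫ z in c..w, (3 / π ^ 2) * (z - c)) =
          (3 / π ^ 2) * ((w ^ 2 - c ^ 2) / 2 - (w - c) * c) := by
        rw [intervalIntegral.integral_const_mul]
        rw [intervalIntegral.integral_sub intervalIntegral.intervalIntegrable_id
          intervalIntegrable_const]
        rw [integral_id, intervalIntegral.integral_const, smul_eq_mul]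
      have hv2 : (∫ z in w..1, (3 / π ^ 2) * (w - c)) = (3 / π ^ 2) * ((w - c) * (1 - w)) := by
        rw [intervalIntegral.integral_const, smul_eq_mul]
        ring
      rw [hadd, hg1, hg2, hv1, hv2]
      rw [E₁, if_pos]
      · rw [abs_of_nonneg hw0, hcdef, hεdef]
        have hπ' : (π:ℝ) ≠ 0 := pi_ne_zero
        have hξ' : ξ ≠ 0 := hξ0.ne'
        field_simp
        ring
      · rw [abs_of_nonneg hw0]
        have : 1 - w < ε := by linarith [hcdef ▸ hcw]
        calc ξ * (1 - w) < ξ * ε := by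
              apply mul_lt_mul_of_pos_left this hξ0
          _ = 1 := by rw [hεdef, mul_inv_cancel₀ hξ0.ne']
    -- the error bound
    have hdiff : ∀ z ∈ uIoc c 1, ‖f z - g z‖ ≤ ε ^ 2 := by
      intro z hz
      rw [uIoc_of_le hc1] at hz
      obtain ⟨hz1, hz2⟩ := hz
      set m := max (min w z - c) 0 with hmdef
      have hm0 : 0 ≤ m := le_max_right _ _
      have hmε : m ≤ ε := by
        apply max_le _ hεpos.le
        have : min w z ≤ z := min_le_right _ _
        simp only [hcdef] at *; linarith
      have hwz1 : 1 ≤ w + z := by linarith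
      have hwz2 : w + z ≤ 2 := by linarith
      have heq : f z - g z = (6 / π ^ 2) * m * ((w + z)⁻¹ - 2⁻¹) := by
        simp only [hfdef, hgdef, ← hmdef, div_eq_mul_inv]
        ring
      rw [heq]
      have hinv : |(w + z)⁻¹ - 2⁻¹| ≤ ε := by
        have heq2 : (w + z)⁻¹ - 2⁻¹ = (2 - (w + z)) / ((w + z) * 2) :=
          inv_sub_inv (by linarith) two_ne_zero
        rw [heq2, abs_div, abs_of_nonneg (by linarith : (0:ℝ) ≤ 2 - (w + z)),
          abs_of_pos (by linarith : (0:ℝ) < (w + z) * 2)]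
        rw [div_le_iff₀ (by linarith)]
        nlinarith [mul_nonneg hεpos.le (by linarith : (0:ℝ) ≤ w + z - 1)]
      rw [Real.norm_eq_abs, abs_mul, abs_of_nonneg (by positivity : (0:ℝ) ≤ 6 / π ^ 2 * m)]
      calc 6 / π ^ 2 * m * |(w + z)⁻¹ - 2⁻¹| ≤ 1 * ε * ε := by
            apply mul_le_mul _ hinv (abs_nonneg _) (by positivity)
            exact mul_le_mul hπ6 hmε hm0 zero_le_one
        _ = ε ^ 2 := by ring
    have hsub : (∫ z in c..1, f z) - (∫ z in c..1, g z) = ∫ z in c..1, (f z - g z) :=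
      (intervalIntegral.integral_sub hfi1 (hgc.intervalIntegrable _ _)).symm
    have hbnd : ‖∫ z in c..1, (f z - g z)‖ ≤ ε ^ 2 * |1 - c| :=
      intervalIntegral.norm_integral_le_of_norm_le_const hdiff
    have hIc : |1 - c| = ε := by rw [hcdef]; simp [abs_of_nonneg hεpos.le]
    have hPhiInt : (∫ z in (-1:ℝ)..1, Φ₀ ξ w z) = ∫ z in c..1, f z := by
      rw [intervalIntegral.integral_congr (g := f) (fun z _ => hPhif z), hsplit, hzero, zero_add]
    rw [hPhiInt, hE]
    rw [show |(∫ z in c..1, f z) - ∫ z in c..1, g z| = ‖(∫ z in c..1, f z) - ∫ z in c..1, g z‖ from rfl]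
    rw [hsub]
    calc ‖∫ z in c..1, (f z - g z)‖ ≤ ε ^ 2 * |1 - c| := hbnd
      _ = ε ^ 3 := by rw [hIc]; ring

lemma phi_neg (ξ w z : ℝ) : Φ₀ ξ (-w) z = Φ₀ ξ w (-z) := by
  simp only [Φ₀, show -w + z = -(w + -z) from by ring, abs_neg, neg_eq_zero, ne_eq]

lemma E₁_neg (ξ w : ℝ) : E₁ ξ (-w) = E₁ ξ w := by rw [E₁, E₁, abs_neg]

/-- Uniform asymptotics: `∫_{−1}^{1} Φ₀(ξ,w,z) dz = E₁(ξ,w) + O(ξ⁻³)` as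
`ξ → ∞`, uniformly in `w ∈ (−1,1)`. -/
theorem stmt16 :
    ∃ C : ℝ, 0 < C ∧ ∀ ξ w : ℝ, 2 ≤ ξ → w ∈ Ioo (-1 : ℝ) 1 →
      |(∫ z in (-1 : ℝ)..1, Φ₀ ξ w z) - E₁ ξ w| ≤ C * ξ⁻¹ ^ 3 := by
  refine ⟨1, one_pos, fun ξ w hξ hw => ?_⟩
  rw [one_mul]
  obtain ⟨hw1, hw2⟩ := hw
  rcases le_or_gt 0 w with h | h
  · exact main_nonneg ξ w hξ h hw2
  · have hsym : (∫ z in (-1 : ℝ)..1, Φ₀ ξ w z) = ∫ z in (-1 : ℝ)..1, Φ₀ ξ (-w) z := by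
      have : (∫ z in (-1 : ℝ)..1, Φ₀ ξ (-w) z) = ∫ z in (-1 : ℝ)..1, Φ₀ ξ w (-z) := by
        apply intervalIntegral.integral_congr
        intro z _
        exact phi_neg ξ w z
      rw [this, intervalIntegral.integral_comp_neg (fun z => Φ₀ ξ w z), neg_neg]
    rw [hsym, ← E₁_neg ξ w]
    exact main_nonneg ξ (-w) hξ (by linarith) (by linarith)
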